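/- arXiv:2205.00713 — 3 statements merged into one kernel-verified Lean document; each statement's English description precedes it below -/
import Mathlib

section
/- The q-binomial theorem holds: for |z| < 1 and |q| < 1, ∑_{k=0}^{∞} (a;q)_k z^k / (q;q)_k = (az;q)_∞ / (z;q)_∞. -/
open Finset Complex

noncomputable def qPoch (a q : ℂ) (n : ℕ) : ℂ :=
  ∏ j ∈ Finset.range n, (1 - a * q ^ j)

noncomputable def qBinom (q : ℂ) (n k : ℕ) : ℂ :=
  qPoch q q n / (qPoch q q k * qPoch q q (n - k))

noncomputable def cauchyP (q x y : ℂ) (n : ℕ) : ℂ :=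
  ∏ j ∈ Finset.range n, (x - q ^ j * y)

noncomputable def Fpoly (q x y z : ℂ) (n : ℕ) : ℂ :=
  (-1) ^ n * q ^ (-((n * (n - 1) / 2 : ℕ) : ℤ)) *
    ∑ k ∈ Finset.range (n + 1),
      qBinom q n k * (-1) ^ k * q ^ (k * (k - 1) / 2) * cauchyP q y x (n - k) * z ^ k

noncomputable def Pq (q ξ y ζ z : ℂ) (n : ℕ) : ℂ :=
  ∑ k ∈ Finset.range (n + 1),
    qBinom q n k * q ^ (k * (k - 1) / 2) * cauchyP q ξ y (n - k) * (-1) ^ k * cauchyP q ζ z k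

noncomputable def psiH (q a x y : ℂ) (n : ℕ) : ℂ := Fpoly q x (a * x) y n

noncomputable def qExp (q z : ℂ) : ℂ := ∑' k : ℕ, z ^ k / qPoch q q k

noncomputable def qExpE (q z : ℂ) : ℂ := ∑' k : ℕ, q ^ (k * (k - 1) / 2) * z ^ k / qPoch q q k

noncomputable def thetaOp (q : ℂ) (g : ℂ → ℂ → ℂ) : ℂ → ℂ → ℂ :=
  fun x y => (g (q⁻¹ * x) y - g x (q * y)) / (q⁻¹ * x - y)

namespace QBinAux

open Filter Topology

noncomputable def coef (a q : ℂ) (k : ℕ) : ℂ := qPoch a q k / qPoch q q k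

lemma one_sub_ne {w : ℂ} (hw : ‖w‖ < 1) : 1 - w ≠ 0 := by
  intro h
  have hw1 : w = 1 := by linear_combination -h
  rw [hw1] at hw
  simp at hw

lemma abs_q_pow_succ_lt {q : ℂ} (hq : ‖q‖ < 1) (j : ℕ) :
    ‖q * q ^ j‖ < 1 := by
  rw [norm_mul, norm_pow]
  have h0 : 0 ≤ ‖q‖ := norm_nonneg q
  have h1 : ‖q‖ ^ j ≤ 1 := pow_le_one₀ h0 hq.le
  nlinarith

lemma qPoch_q_ne {q : ℂ} (hq : ‖q‖ < 1) (k : ℕ) : qPoch q q k ≠ 0 := by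
  rw [qPoch]
  apply Finset.prod_ne_zero_iff.mpr
  intro j _
  exact one_sub_ne (by simpa [pow_succ'] using abs_q_pow_succ_lt hq j)

lemma coef_rec {q : ℂ} (hq : ‖q‖ < 1) (a : ℂ) (k : ℕ) :
    coef a q (k + 1) * (1 - q ^ (k + 1)) = coef a q k * (1 - a * q ^ k) := by
  have h1 : qPoch a q (k + 1) = qPoch a q k * (1 - a * q ^ k) := by
    rw [qPoch, qPoch, Finset.prod_range_succ]
  have h2 : qPoch q q (k + 1) = qPoch q q k * (1 - q ^ (k + 1)) := by
    rw [qPoch, qPoch, Finset.prod_range_succ, pow_succ']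
  have h3 := qPoch_q_ne hq k
  have h4 := qPoch_q_ne hq (k + 1)
  rw [coef, coef, h1]
  rw [h2] at h4 ⊢
  have h5 : (1 : ℂ) - q ^ (k + 1) ≠ 0 := right_ne_zero_of_mul h4
  field_simp

lemma summable_T {q : ℂ} (hq : ‖q‖ < 1) (a : ℂ) {w : ℂ} (hw : ‖w‖ < 1) :
    Summable (fun k : ℕ => coef a q k * w ^ k) := by
  apply summable_of_ratio_norm_eventually_le (r := (1 + ‖w‖) / 2) (by linarith)
  have key : ∀ k : ℕ, coef a q (k + 1) * w ^ (k + 1)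
      = ((1 - a * q ^ k) * w / (1 - q ^ (k + 1))) * (coef a q k * w ^ k) := by
    intro k
    have h4 : (1 : ℂ) - q ^ (k + 1) ≠ 0 :=
      one_sub_ne (by simpa [pow_succ'] using abs_q_pow_succ_lt hq k)
    have h := coef_rec hq a k
    field_simp
    linear_combination w ^ (k + 1) * h
  have hq0 : Tendsto (fun k : ℕ => (q : ℂ) ^ k) atTop (𝓝 0) :=
    tendsto_pow_atTop_nhds_zero_of_norm_lt_one (by simpa using hq)
  have ht : Tendsto (fun k : ℕ => ‖(1 - a * q ^ k) * w / (1 - q ^ (k + 1))‖)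
      atTop (𝓝 (‖w‖)) := by
    have h1 : Tendsto (fun k : ℕ => ((1 - a * q ^ k) * w / (1 - q ^ (k + 1)))) atTop
        (𝓝 ((1 - a * 0) * w / (1 - q * 0))) := by
      apply Tendsto.div
      · exact (tendsto_const_nhds.sub (hq0.const_mul a)).mul tendsto_const_nhds
      · have : Tendsto (fun k : ℕ => (q : ℂ) ^ (k + 1)) atTop (𝓝 (q * 0)) := by
          simpa [pow_succ'] using hq0.const_mul q
        exact tendsto_const_nhds.sub this
      · simp
    have h2 := (continuous_norm.tendsto _).comp h1
    simp only [Function.comp, mul_zero, sub_zero, one_mul, div_one] at h2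
    exact h2
  have hev := ht.eventually_lt_const (by linarith : ‖w‖ < (1 + ‖w‖) / 2)
  filter_upwards [hev] with k hk
  rw [key k]
  have : ‖(1 - a * q ^ k) * w / (1 - q ^ (k + 1)) * (coef a q k * w ^ k)‖
      = ‖(1 - a * q ^ k) * w / (1 - q ^ (k + 1))‖ * ‖coef a q k * w ^ k‖ := by
    rw [norm_mul]
  rw [this]
  exact mul_le_mul_of_nonneg_right hk.le (norm_nonneg _)

lemma coef_zero (a q : ℂ) : coef a q 0 = 1 := by simp [coef, qPoch]

lemma funcEq {q : ℂ} (hq : ‖q‖ < 1) (a : ℂ) {w : ℂ} (hw : ‖w‖ < 1) :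
    (1 - w) * ∑' k : ℕ, coef a q k * w ^ k
      = (1 - a * w) * ∑' k : ℕ, coef a q k * (q * w) ^ k := by
  have hqw : ‖q * w‖ < 1 := by
    rw [norm_mul]
    have h0 : 0 ≤ ‖q‖ := norm_nonneg q
    have h1 : 0 ≤ ‖w‖ := norm_nonneg w
    nlinarith
  have S1 := (summable_T hq a hw).hasSum
  have S2 := (summable_T hq a hqw).hasSum
  set u : ℕ → ℂ := fun n => coef a q n * (1 - q ^ n) * w ^ n with hu
  have hd : ∀ k : ℕ, (1 - a * w) * (coef a q k * (q * w) ^ k)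
      - (1 - w) * (coef a q k * w ^ k) = u (k + 1) - u k := by
    intro k
    have e1 := coef_rec hq a k
    simp only [hu]
    linear_combination -(w ^ (k + 1)) * e1
  have H : HasSum (fun k : ℕ => (1 - a * w) * (coef a q k * (q * w) ^ k)
      - (1 - w) * (coef a q k * w ^ k))
      ((1 - a * w) * ∑' k : ℕ, coef a q k * (q * w) ^ k
        - (1 - w) * ∑' k : ℕ, coef a q k * w ^ k) :=
    (S2.mul_left _).sub (S1.mul_left _)
  have Hps : ∀ n : ℕ, ∑ k ∈ Finset.range n, ((1 - a * w) * (coef a q k * (q * w) ^ k)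
      - (1 - w) * (coef a q k * w ^ k)) = u n := by
    intro n
    rw [Finset.sum_congr rfl fun k _ => hd k, Finset.sum_range_sub u n]
    simp [hu]
  have hulim : Tendsto u atTop (𝓝 0) := by
    have h1 : Tendsto (fun n : ℕ => coef a q n * w ^ n) atTop (𝓝 0) :=
      (summable_T hq a hw).tendsto_atTop_zero
    have h2 : Tendsto (fun n : ℕ => (1 : ℂ) - q ^ n) atTop (𝓝 (1 - 0)) :=
      tendsto_const_nhds.sub (tendsto_pow_atTop_nhds_zero_of_norm_lt_one (by simpa using hq))
    have h3 : Tendsto u atTop (𝓝 (0 * (1 - 0))) := by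
      apply (h1.mul h2).congr
      intro n
      simp only [hu]
      ring
    simpa using h3
  have Hlim := H.tendsto_sum_nat
  rw [show (fun n : ℕ => ∑ k ∈ Finset.range n, ((1 - a * w) * (coef a q k * (q * w) ^ k)
      - (1 - w) * (coef a q k * w ^ k))) = u from funext Hps] at Hlim
  have h0 := tendsto_nhds_unique Hlim hulim
  linear_combination -h0

lemma abs_qnz_lt {q z : ℂ} (hq : ‖q‖ < 1) (hz : ‖z‖ < 1) (n : ℕ) :
    ‖q ^ n * z‖ < 1 := by
  rw [norm_mul, norm_pow]
  have h0 : 0 ≤ ‖q‖ := norm_nonneg q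
  have h1 : ‖q‖ ^ n ≤ 1 := pow_le_one₀ h0 hq.le
  have h2 : 0 ≤ ‖z‖ := norm_nonneg z
  nlinarith

lemma iterate_eq {q a z : ℂ} (hq : ‖q‖ < 1) (hz : ‖z‖ < 1) (n : ℕ) :
    (∑' k : ℕ, coef a q k * z ^ k) * ∏ j ∈ Finset.range n, (1 - z * q ^ j)
      = (∏ j ∈ Finset.range n, (1 - a * z * q ^ j)) * ∑' k : ℕ, coef a q k * (q ^ n * z) ^ k := by
  induction n with
  | zero => simp
  | succ n ih =>
    have hwn : ‖q ^ n * z‖ < 1 := abs_qnz_lt hq hz n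
    have FE := funcEq hq a hwn
    rw [show q * (q ^ n * z) = q ^ (n + 1) * z by ring] at FE
    rw [Finset.prod_range_succ, Finset.prod_range_succ]
    linear_combination (1 - z * q ^ n) * ih
      + (∏ j ∈ Finset.range n, (1 - a * z * q ^ j)) * FE

lemma summable_log {q : ℂ} (hq : ‖q‖ < 1) (c : ℂ)
    (hc : ∀ j : ℕ, (1 : ℂ) - c * q ^ j ≠ 0) :
    Summable fun j : ℕ => Complex.log (1 - c * q ^ j) := by
  apply Summable.of_norm_bounded_eventually_nat
    (g := fun j => 3 / 2 * (‖c‖ * ‖q‖ ^ j))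
  · apply Summable.mul_left
    exact (summable_geometric_of_lt_one (norm_nonneg q) hq).mul_left _
  · have ht : Tendsto (fun j : ℕ => ‖c‖ * ‖q‖ ^ j) atTop (𝓝 0) := by
      simpa using (tendsto_pow_atTop_nhds_zero_of_lt_one (norm_nonneg q) hq).const_mul
        (‖c‖)
    filter_upwards [ht.eventually_lt_const (by norm_num : (0:ℝ) < 1/2)] with j hj
    have h1 : ‖-(c * q ^ j)‖ ≤ 1 / 2 := by
      rw [norm_neg]
      have : ‖c * q ^ j‖ = ‖c‖ * ‖q‖ ^ j := by
        rw [norm_mul, norm_pow]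
      rw [this]; linarith
    have := Complex.norm_log_one_add_half_le_self h1
    rw [show (1 : ℂ) + -(c * q ^ j) = 1 - c * q ^ j by ring] at this
    rw [norm_neg] at this
    calc ‖Complex.log (1 - c * q ^ j)‖ ≤ 3 / 2 * ‖c * q ^ j‖ := this
      _ = 3 / 2 * (‖c‖ * ‖q‖ ^ j) := by
          rw [norm_mul, norm_pow]

lemma hasProd_of_ne {q : ℂ} (hq : ‖q‖ < 1) (c : ℂ)
    (hc : ∀ j : ℕ, (1 : ℂ) - c * q ^ j ≠ 0) :
    HasProd (fun j : ℕ => 1 - c * q ^ j)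
      (Complex.exp (∑' j : ℕ, Complex.log (1 - c * q ^ j))) := by
  have h := (summable_log hq c hc).hasSum.cexp
  have hfe : (Complex.exp ∘ fun j : ℕ => Complex.log (1 - c * q ^ j))
      = fun j : ℕ => 1 - c * q ^ j := by
    funext j
    simp [Function.comp, Complex.exp_log (hc j)]
  rwa [hfe] at h

lemma tendsto_prod {q : ℂ} (hq : ‖q‖ < 1) (c : ℂ) :
    Tendsto (fun n : ℕ => ∏ j ∈ Finset.range n, (1 - c * q ^ j)) atTop
      (𝓝 (∏' j : ℕ, (1 - c * q ^ j))) := by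
  by_cases hc : ∀ j : ℕ, (1 : ℂ) - c * q ^ j ≠ 0
  · have h := hasProd_of_ne hq c hc
    rw [h.tprod_eq]
    exact h.tendsto_prod_nat
  · push_neg at hc
    obtain ⟨j0, hj0⟩ := hc
    have h0 : HasProd (fun j : ℕ => 1 - c * q ^ j) 0 := by
      rw [HasProd]
      apply Tendsto.congr' _ tendsto_const_nhds
      filter_upwards [Filter.eventually_ge_atTop ({j0} : Finset ℕ)] with s hs
      exact (Finset.prod_eq_zero (hs (Finset.mem_singleton_self j0)) hj0).symm
    rw [h0.tprod_eq]
    exact h0.tendsto_prod_nat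

lemma tprod_ne_zero {q c : ℂ} (hq : ‖q‖ < 1) (hc : ‖c‖ < 1) :
    (∏' j : ℕ, (1 - c * q ^ j)) ≠ 0 := by
  have hcj : ∀ j : ℕ, (1 : ℂ) - c * q ^ j ≠ 0 := by
    intro j
    apply one_sub_ne
    rw [norm_mul, norm_pow]
    have h1 : ‖q‖ ^ j ≤ 1 := pow_le_one₀ (norm_nonneg q) hq.le
    have h2 : 0 ≤ ‖c‖ := norm_nonneg c
    nlinarith
  rw [(hasProd_of_ne hq c hcj).tprod_eq]
  exact Complex.exp_ne_zero _

lemma tendsto_S_one {q a z : ℂ} (hq : ‖q‖ < 1) (hz : ‖z‖ < 1) :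
    Tendsto (fun n : ℕ => ∑' k : ℕ, coef a q k * (q ^ n * z) ^ k) atTop (𝓝 1) := by
  have ht : Summable (fun k : ℕ => coef a q k * z ^ k) := summable_T hq a hz
  obtain ⟨M, hM⟩ := (tendsto_zero_iff_norm_tendsto_zero.mp ht.tendsto_atTop_zero).bddAbove_range
  rw [mem_upperBounds] at hM
  have hMk : ∀ k : ℕ, ‖coef a q k * z ^ k‖ ≤ M := fun k => hM _ ⟨k, rfl⟩
  have hM0 : 0 ≤ M := le_trans (norm_nonneg _) (hMk 0)
  rw [tendsto_iff_norm_sub_tendsto_zero]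
  set p := ‖q‖ with hp
  have hp0 : 0 ≤ p := norm_nonneg q
  apply squeeze_zero' (Filter.Eventually.of_forall fun n => norm_nonneg _)
    (g := fun n => M * p ^ n * (1 - p)⁻¹)
  · filter_upwards [Filter.eventually_ge_atTop 1] with n hn
    have hwn : ‖q ^ n * z‖ < 1 := abs_qnz_lt hq hz n
    have hSn := (summable_T hq a hwn).hasSum
    have hshift : HasSum (fun k : ℕ => coef a q (k + 1) * (q ^ n * z) ^ (k + 1))
        ((∑' k : ℕ, coef a q k * (q ^ n * z) ^ k) - 1) := by
      have := (hasSum_nat_add_iff' (f := fun k : ℕ => coef a q k * (q ^ n * z) ^ k) 1).mpr hSn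
      simpa [coef_zero] using this
    have hbnd : ∀ k : ℕ, ‖coef a q (k + 1) * (q ^ n * z) ^ (k + 1)‖ ≤ M * p ^ n * p ^ k := by
      intro k
      have he : coef a q (k + 1) * (q ^ n * z) ^ (k + 1)
          = (coef a q (k + 1) * z ^ (k + 1)) * (q ^ n) ^ (k + 1) := by ring
      rw [he, norm_mul]
      have h1 : ‖(q ^ n : ℂ) ^ (k + 1)‖ = (p ^ n) ^ (k + 1) := by
        rw [norm_pow, norm_pow]
      rw [h1]
      have hpn1 : p ^ n ≤ p := by
        calc p ^ n ≤ p ^ 1 := pow_le_pow_of_le_one hp0 hq.le hn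
          _ = p := pow_one p
      have h2 : (p ^ n) ^ (k + 1) ≤ p ^ n * p ^ k := by
        rw [pow_succ']
        have : (p ^ n) ^ k ≤ p ^ k := pow_le_pow_left₀ (pow_nonneg hp0 n) hpn1 k
        have hpnn : 0 ≤ p ^ n := pow_nonneg hp0 n
        nlinarith [pow_nonneg hpnn k]
      calc ‖coef a q (k + 1) * z ^ (k + 1)‖ * (p ^ n) ^ (k + 1)
          ≤ M * (p ^ n * p ^ k) := by
            apply mul_le_mul (hMk (k + 1)) h2 (pow_nonneg (pow_nonneg hp0 n) _) hM0
        _ = M * p ^ n * p ^ k := by ring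
    have hsum_b : Summable (fun k : ℕ => M * p ^ n * p ^ k) :=
      (summable_geometric_of_lt_one hp0 hq).mul_left _
    have hsum_f : Summable (fun k : ℕ => ‖coef a q (k + 1) * (q ^ n * z) ^ (k + 1)‖) :=
      Summable.of_nonneg_of_le (fun k => norm_nonneg _) hbnd hsum_b
    calc ‖(∑' k : ℕ, coef a q k * (q ^ n * z) ^ k) - 1‖
        = ‖∑' k : ℕ, coef a q (k + 1) * (q ^ n * z) ^ (k + 1)‖ := by rw [hshift.tsum_eq]
      _ ≤ ∑' k : ℕ, ‖coef a q (k + 1) * (q ^ n * z) ^ (k + 1)‖ := norm_tsum_le_tsum_norm hsum_f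
      _ ≤ ∑' k : ℕ, M * p ^ n * p ^ k := Summable.tsum_le_tsum hbnd hsum_f hsum_b
      _ = M * p ^ n * ∑' k : ℕ, p ^ k := tsum_mul_left
      _ = M * p ^ n * (1 - p)⁻¹ := by rw [tsum_geometric_of_lt_one hp0 hq]
  · have h1 : Tendsto (fun n : ℕ => p ^ n) atTop (𝓝 0) :=
      tendsto_pow_atTop_nhds_zero_of_lt_one hp0 hq
    have := (h1.const_mul M).mul_const (1 - p)⁻¹
    simpa using this

end QBinAux

open QBinAux Filter Topology in
theorem q_binomial_theorem (q a z : ℂ) (hq : ‖q‖ < 1) (hz : ‖z‖ < 1) :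
    HasSum (fun k : ℕ => qPoch a q k * z ^ k / qPoch q q k)
      ((∏' j : ℕ, (1 - a * z * q ^ j)) / ∏' j : ℕ, (1 - z * q ^ j)) := by
  set S := ∑' k : ℕ, coef a q k * z ^ k with hS
  set A := ∏' j : ℕ, (1 - a * z * q ^ j) with hA
  set B := ∏' j : ℕ, (1 - z * q ^ j) with hB
  have h1 : Tendsto (fun n : ℕ => S * ∏ j ∈ Finset.range n, (1 - z * q ^ j)) atTop
      (𝓝 (S * B)) := (tendsto_prod hq z).const_mul S
  have h2 : Tendsto (fun n : ℕ => (∏ j ∈ Finset.range n, (1 - a * z * q ^ j))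
      * ∑' k : ℕ, coef a q k * (q ^ n * z) ^ k) atTop (𝓝 (A * 1)) :=
    (tendsto_prod hq (a * z)).mul (tendsto_S_one hq hz)
  have h3 : S * B = A * 1 :=
    tendsto_nhds_unique (h1.congr fun n => iterate_eq hq hz n) h2
  have hBne : B ≠ 0 := tprod_ne_zero hq hz
  have hSeq : S = A / B := by
    rw [eq_div_iff hBne]
    simpa using h3
  have hsum : HasSum (fun k : ℕ => coef a q k * z ^ k) (A / B) := by
    rw [← hSeq]
    exact (summable_T hq a hz).hasSum
  have hfun : (fun k : ℕ => qPoch a q k * z ^ k / qPoch q q k)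
      = fun k : ℕ => coef a q k * z ^ k := by
    funext k
    rw [coef, div_mul_eq_mul_div]
  rw [hfun]
  exact hsum
end

section
/- Euler's identity holds: for |z| < 1 and |q| < 1, ∑_{k=0}^{∞} z^k / (q;q)_k = 1/(z;q)_∞. -/
open Finset Complex

noncomputable def Complex.abs : AbsoluteValue ℂ ℝ where
  toFun x := ‖x‖
  map_mul' := norm_mul
  nonneg' := norm_nonneg
  eq_zero' _ := norm_eq_zero
  add_le' := norm_add_le

lemma Complex.norm_eq_abs (z : ℂ) : ‖z‖ = Complex.abs z := rfl

section EulerAux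

open Filter Topology

variable {q z : ℂ}

private lemma abs_q_pow_le (hq : Complex.abs q < 1) (k : ℕ) : Complex.abs q ^ k ≤ 1 :=
  pow_le_one₀ (AbsoluteValue.nonneg _ _) hq.le

private lemma abs_q_pow_succ_lt (hq : Complex.abs q < 1) (k : ℕ) :
    Complex.abs (q ^ (k + 1)) < 1 := by
  rw [map_pow]
  calc Complex.abs q ^ (k + 1) = Complex.abs q ^ k * Complex.abs q := pow_succ _ _
    _ ≤ 1 * Complex.abs q := by
        have := abs_q_pow_le hq k
        nlinarith [AbsoluteValue.nonneg Complex.abs q]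
    _ < 1 := by simpa using hq

private lemma factor_ne (hq : Complex.abs q < 1) (k : ℕ) : (1 : ℂ) - q ^ (k + 1) ≠ 0 := by
  intro h
  have h1 : q ^ (k + 1) = 1 := by linear_combination -h
  have := abs_q_pow_succ_lt hq k
  rw [h1] at this
  simp at this

private lemma qPoch_ne (hq : Complex.abs q < 1) (k : ℕ) : qPoch q q k ≠ 0 := by
  unfold qPoch
  rw [Finset.prod_ne_zero_iff]
  intro j _
  have := factor_ne hq j
  rwa [show (1 : ℂ) - q ^ (j + 1) = 1 - q * q ^ j by ring] at this

private lemma qPoch_succ (k : ℕ) : qPoch q q (k + 1) = qPoch q q k * (1 - q ^ (k + 1)) := by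
  unfold qPoch
  rw [Finset.prod_range_succ]
  ring

private lemma summable_euler (hq : Complex.abs q < 1) {w : ℂ} (hw : Complex.abs w < 1) :
    Summable (fun k : ℕ => w ^ k / qPoch q q k) := by
  rcases eq_or_ne w 0 with rfl | hw0
  · apply summable_of_ne_finset_zero (s := {0})
    intro k hk
    simp only [Finset.mem_singleton] at hk
    simp [zero_pow hk]
  · rw [show Complex.abs w = ‖w‖ from (Complex.norm_eq_abs w).symm] at hw
    refine summable_of_ratio_test_tendsto_lt_one hw
      (Eventually.of_forall fun n => div_ne_zero (pow_ne_zero _ hw0) (qPoch_ne hq n)) ?_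
    have h1 : ∀ n : ℕ, ‖w ^ (n + 1) / qPoch q q (n + 1)‖ / ‖w ^ n / qPoch q q n‖
        = ‖w‖ / ‖(1 : ℂ) - q ^ (n + 1)‖ := by
      intro n
      rw [qPoch_succ]
      have hP : Complex.abs (qPoch q q n) ≠ 0 := Complex.abs.ne_zero (qPoch_ne hq n)
      have hc : Complex.abs (1 - q ^ (n + 1)) ≠ 0 := Complex.abs.ne_zero (factor_ne hq n)
      have hwn : Complex.abs w ≠ 0 := Complex.abs.ne_zero hw0
      simp only [norm_div, norm_mul, norm_pow, Complex.norm_eq_abs]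
      rw [div_div_div_comm, pow_succ]
      rw [mul_comm (Complex.abs w ^ n) (Complex.abs w), mul_div_assoc,
        div_self (pow_ne_zero n hwn), mul_one, mul_comm (Complex.abs (qPoch q q n)),
        mul_div_assoc, div_self hP, mul_one]
    have h2 : Tendsto (fun n : ℕ => ‖(1 : ℂ) - q ^ (n + 1)‖) atTop (𝓝 ‖(1 : ℂ) - 0‖) := by
      apply Tendsto.norm
      apply tendsto_const_nhds.sub
      rw [show Complex.abs q = ‖q‖ from (Complex.norm_eq_abs q).symm] at hq
      exact (tendsto_pow_atTop_nhds_zero_of_norm_lt_one hq).comp (tendsto_add_atTop_nat 1)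
    have h3 : Tendsto (fun n : ℕ => ‖w‖ / ‖(1 : ℂ) - q ^ (n + 1)‖) atTop (𝓝 (‖w‖ / ‖(1 : ℂ) - 0‖)) :=
      tendsto_const_nhds.div h2 (by simp)
    simp only [sub_zero, norm_one, div_one] at h3
    exact (funext h1 : _) ▸ h3

private lemma funEq (hq : Complex.abs q < 1) {w : ℂ} (hw : Complex.abs w < 1) :
    (1 - w) * (∑' k : ℕ, w ^ k / qPoch q q k) = ∑' k : ℕ, (q * w) ^ k / qPoch q q k := by
  have hqw : Complex.abs (q * w) < 1 := by
    rw [map_mul]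
    nlinarith [AbsoluteValue.nonneg Complex.abs q, AbsoluteValue.nonneg Complex.abs w]
  have h1 := (summable_euler hq hw).hasSum
  have h2 := (summable_euler hq hqw).hasSum
  set S := ∑' k : ℕ, w ^ k / qPoch q q k with hS
  set T := ∑' k : ℕ, (q * w) ^ k / qPoch q q k with hT
  set f : ℕ → ℂ := fun k => (w ^ k - (q * w) ^ k) / qPoch q q k with hf
  have hfun : (fun k : ℕ => f (k + 1)) = fun k => w * (w ^ k / qPoch q q k) := by
    funext k
    have hPne := qPoch_ne hq k
    have hcne := factor_ne hq k
    simp only [hf, qPoch_succ]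
    field_simp
    ring
  have key : HasSum f (w * S) := by
    rw [← hasSum_nat_add_iff' 1]
    have h0 : ∑ i ∈ Finset.range 1, f i = 0 := by
      simp [hf, qPoch]
    rw [h0, sub_zero, hfun]
    exact h1.mul_left w
  have key2 : HasSum f (S - T) := by
    have hfe : f = fun k : ℕ => w ^ k / qPoch q q k - (q * w) ^ k / qPoch q q k :=
      funext fun k => (sub_div _ _ _)
    rw [hfe]
    exact h1.sub h2
  have huni : S - T = w * S := key2.unique key
  linear_combination huni

private lemma iterEq (hq : Complex.abs q < 1) (hz : Complex.abs z < 1) (n : ℕ) :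
    (∑' k : ℕ, z ^ k / qPoch q q k) * ∏ j ∈ Finset.range n, (1 - z * q ^ j)
      = ∑' k : ℕ, (q ^ n * z) ^ k / qPoch q q k := by
  induction n with
  | zero => simp
  | succ n ih =>
    rw [Finset.prod_range_succ, ← mul_assoc, ih]
    have habs : Complex.abs (q ^ n * z) < 1 := by
      rw [map_mul, map_pow]
      calc Complex.abs q ^ n * Complex.abs z ≤ 1 * Complex.abs z := by
            have := abs_q_pow_le hq n
            nlinarith [AbsoluteValue.nonneg Complex.abs z]
        _ < 1 := by simpa using hz
    calc (∑' k : ℕ, (q ^ n * z) ^ k / qPoch q q k) * (1 - z * q ^ n)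
        = (1 - q ^ n * z) * ∑' k : ℕ, (q ^ n * z) ^ k / qPoch q q k := by ring
      _ = ∑' k : ℕ, (q * (q ^ n * z)) ^ k / qPoch q q k := funEq hq habs
      _ = ∑' k : ℕ, (q ^ (n + 1) * z) ^ k / qPoch q q k := by
          exact tsum_congr fun k => by rw [show q * (q ^ n * z) = q ^ (n + 1) * z by ring]

private lemma tendsto_one (hq : Complex.abs q < 1) (hz : Complex.abs z < 1) :
    Tendsto (fun n : ℕ => ∑' k : ℕ, (q ^ n * z) ^ k / qPoch q q k) atTop (𝓝 1) := by
  have hbound : Summable (fun k : ℕ => ‖z ^ k / qPoch q q k‖) :=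
    summable_norm_iff.mpr (summable_euler hq hz)
  have hab : ∀ k : ℕ, Tendsto (fun n : ℕ => (q ^ n * z) ^ k / qPoch q q k) atTop
      (𝓝 (if k = 0 then (1 : ℂ) else 0)) := by
    intro k
    match k with
    | 0 => simpa [qPoch] using (tendsto_const_nhds :
        Tendsto (fun _ : ℕ => (1 : ℂ)) atTop (𝓝 1))
    | (m + 1) =>
      have hqm : ‖q ^ (m + 1)‖ < 1 := by
        rw [show ‖q ^ (m + 1)‖ = Complex.abs (q ^ (m + 1)) from Complex.norm_eq_abs _]
        exact abs_q_pow_succ_lt hq m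
      have h0 : Tendsto (fun n : ℕ => (q ^ (m + 1)) ^ n * (z ^ (m + 1) / qPoch q q (m + 1)))
          atTop (𝓝 0) := by
        simpa using (tendsto_pow_atTop_nhds_zero_of_norm_lt_one hqm).mul_const
          (z ^ (m + 1) / qPoch q q (m + 1))
      simp only [if_neg (Nat.succ_ne_zero m)]
      refine h0.congr fun n => ?_
      rw [mul_pow, ← pow_mul, ← pow_mul, Nat.mul_comm n (m + 1), mul_div_assoc]
  have hb : ∀ᶠ (n : ℕ) in atTop, ∀ k : ℕ,
      ‖(q ^ n * z) ^ k / qPoch q q k‖ ≤ ‖z ^ k / qPoch q q k‖ := by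
    refine Eventually.of_forall fun n k => ?_
    rw [norm_div, norm_div, norm_pow, norm_pow]
    have hle : ‖q ^ n * z‖ ≤ ‖z‖ := by
      rw [norm_mul, norm_pow]
      have h1 : ‖q‖ ^ n ≤ 1 := by
        rw [show ‖q‖ = Complex.abs q from Complex.norm_eq_abs q]
        exact abs_q_pow_le hq n
      nlinarith [norm_nonneg z, norm_nonneg q, pow_nonneg (norm_nonneg q) n]
    gcongr
  have key := tendsto_tsum_of_dominated_convergence hbound hab hb
  have hg : ∑' k : ℕ, (if k = 0 then (1 : ℂ) else 0) = 1 := tsum_ite_eq 0 1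
  rwa [hg] at key

private lemma summable_log (hq : Complex.abs q < 1) (hz : Complex.abs z < 1) :
    Summable (fun j : ℕ => Complex.log (1 - z * q ^ j)) := by
  have hgeo : Summable (fun j : ℕ => 3 / 2 * (Complex.abs z * Complex.abs q ^ j)) := by
    exact ((summable_geometric_of_lt_one (AbsoluteValue.nonneg _ _) hq).mul_left
      (Complex.abs z)).mul_left (3 / 2)
  refine Summable.of_norm_bounded_eventually_nat hgeo ?_
  have hev : ∀ᶠ j in atTop, Complex.abs z * Complex.abs q ^ j ≤ 1 / 2 := by
    have ht : Tendsto (fun j : ℕ => Complex.abs z * Complex.abs q ^ j) atTop (𝓝 0) := by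
      simpa using (tendsto_pow_atTop_nhds_zero_of_lt_one (AbsoluteValue.nonneg _ _)
        hq).const_mul (Complex.abs z)
    exact ht.eventually_le_const (by norm_num)
  filter_upwards [hev] with j hj
  have hn : ‖-(z * q ^ j)‖ ≤ 1 / 2 := by
    rwa [norm_neg, norm_mul, norm_pow, Complex.norm_eq_abs, Complex.norm_eq_abs]
  calc ‖Complex.log (1 - z * q ^ j)‖ = ‖Complex.log (1 + -(z * q ^ j))‖ := by
        rw [sub_eq_add_neg]
    _ ≤ 3 / 2 * ‖-(z * q ^ j)‖ := Complex.norm_log_one_add_half_le_self hn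
    _ = 3 / 2 * (Complex.abs z * Complex.abs q ^ j) := by
        rw [norm_neg, norm_mul, norm_pow, Complex.norm_eq_abs, Complex.norm_eq_abs]

private lemma factor_ne' (hq : Complex.abs q < 1) (hz : Complex.abs z < 1) (j : ℕ) :
    (1 : ℂ) - z * q ^ j ≠ 0 := by
  intro h
  have h1 : z * q ^ j = 1 := by linear_combination -h
  have h2 := congrArg Complex.abs h1
  rw [map_mul, map_pow, map_one] at h2
  have h3 := abs_q_pow_le hq j
  nlinarith [AbsoluteValue.nonneg Complex.abs z, AbsoluteValue.nonneg Complex.abs q,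
    pow_nonneg (AbsoluteValue.nonneg Complex.abs q) j]

private lemma hasProd_euler (hq : Complex.abs q < 1) (hz : Complex.abs z < 1) :
    HasProd (fun j : ℕ => 1 - z * q ^ j)
      (Complex.exp (∑' j : ℕ, Complex.log (1 - z * q ^ j))) := by
  have hsum := (summable_log hq hz).hasSum
  have := hsum.cexp
  have hfe : (fun j : ℕ => Complex.exp (Complex.log (1 - z * q ^ j)))
      = fun j : ℕ => 1 - z * q ^ j :=
    funext fun j => Complex.exp_log (factor_ne' hq hz j)
  rwa [show Complex.exp ∘ (fun j : ℕ => Complex.log (1 - z * q ^ j))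
      = fun j : ℕ => Complex.exp (Complex.log (1 - z * q ^ j)) from rfl, hfe] at this

end EulerAux

theorem euler_identity (q z : ℂ) (hq : ‖q‖ < 1) (hz : ‖z‖ < 1) :
    HasSum (fun k : ℕ => z ^ k / qPoch q q k)
      (1 / ∏' j : ℕ, (1 - z * q ^ j)) := by
  replace hq : Complex.abs q < 1 := hq
  replace hz : Complex.abs z < 1 := hz
  open Filter Topology in
  have hP := hasProd_euler hq hz
  have hPtp : (∏' j : ℕ, (1 - z * q ^ j))
      = Complex.exp (∑' j : ℕ, Complex.log (1 - z * q ^ j)) := hP.tprod_eq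
  set P := ∏' j : ℕ, (1 - z * q ^ j) with hPdef
  have hPne : P ≠ 0 := by rw [hPtp]; exact Complex.exp_ne_zero _
  set S := ∑' k : ℕ, z ^ k / qPoch q q k with hSdef
  have h1 : Filter.Tendsto (fun n : ℕ => ∏ j ∈ Finset.range n, (1 - z * q ^ j))
      Filter.atTop (nhds P) := by
    rw [hPtp]
    exact hP.tendsto_prod_nat
  have h2 : Filter.Tendsto (fun n : ℕ => S * ∏ j ∈ Finset.range n, (1 - z * q ^ j))
      Filter.atTop (nhds (S * P)) := h1.const_mul S
  have h3 : Filter.Tendsto (fun n : ℕ => S * ∏ j ∈ Finset.range n, (1 - z * q ^ j))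
      Filter.atTop (nhds 1) :=
    (tendsto_one hq hz).congr fun n => (iterEq hq hz n).symm
  have hSP : S * P = 1 := tendsto_nhds_unique h2 h3
  have hS : S = 1 / P := by
    rw [eq_div_iff hPne]
    exact hSP
  exact hS ▸ (summable_euler hq hz).hasSum
end

section
/- The trivariate q-polynomials F_n(x,y,z;q) := (-1)^n q^{-n(n-1)/2} ∑_{k=0}^{n} [n choose k]_q (-1)^k q^{k(k-1)/2} P_{n-k}(y,x) z^k satisfy the generating function ∑_{n=0}^{∞} F_n(x,y,z;q) (-1)^n q^{n(n-1)/2} t^n / (q;q)_n = (xt;q)_∞ (zt;q)_∞ / (yt;q)_∞, as formal power series in t (or for |yt| < 1). -/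
open Finset Complex

lemma tri (k : ℕ) : (k+1)*k/2 = k*(k-1)/2 + k := by
  rcases k with _ | m
  · simp
  · have h : (m+2)*(m+1) = (m+1)*m + (m+1)*2 := by ring
    simp only [Nat.succ_sub_one]
    rw [h, Nat.add_mul_div_right _ _ (by norm_num : (0:ℕ) < 2)]

lemma fac_ne (q w : ℂ) (hq1 : ‖q‖ < 1) (hw : ‖w‖ < 1) (j : ℕ) :
    1 - w * q ^ j ≠ 0 := by
  intro h
  have h2 : w * q ^ j = 1 := by linear_combination -h
  have : ‖w * q ^ j‖ < 1 := by
    rw [norm_mul, norm_pow]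
    calc ‖w‖ * ‖q‖ ^ j ≤ ‖w‖ * 1 :=
          mul_le_mul_of_nonneg_left (pow_le_one₀ (norm_nonneg q) hq1.le)
            (norm_nonneg w)
      _ < 1 := by simpa using hw
  rw [h2] at this; simp at this

lemma pq_ne (q : ℂ) (hq1 : ‖q‖ < 1) (n : ℕ) : qPoch q q n ≠ 0 := by
  rw [qPoch, Finset.prod_ne_zero_iff]
  exact fun j _ => fac_ne q q hq1 hq1 j

open Filter Topology in
lemma log_summ (q w : ℂ) (hq1 : ‖q‖ < 1) :
    Summable (fun j : ℕ => Complex.log (1 - w * q ^ j)) := by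
  have hgeo : Summable (fun j : ℕ => 3/2 * ‖w‖ * ‖q‖ ^ j) :=
    (summable_geometric_of_lt_one (norm_nonneg q) hq1).mul_left _
  apply Summable.of_norm_bounded_eventually hgeo
  rw [Nat.cofinite_eq_atTop]
  have hq0 : Tendsto (fun j : ℕ => ‖w‖ * ‖q‖ ^ j) atTop (𝓝 0) := by
    simpa using ((tendsto_pow_atTop_nhds_zero_of_lt_one (norm_nonneg q)
      hq1).const_mul (‖w‖))
  filter_upwards [hq0.eventually_le_const (by norm_num : (0:ℝ) < 1/2)] with j hj
  have hb : ‖(- (w * q ^ j))‖ ≤ 1/2 := by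
    simpa [norm_neg, map_mul, map_pow] using hj
  have := Complex.norm_log_one_add_half_le_self hb
  calc ‖Complex.log (1 - w * q ^ j)‖
      = ‖Complex.log (1 + -(w * q ^ j))‖ := by ring_nf
    _ ≤ 3/2 * ‖-(w * q ^ j)‖ := this
    _ = 3/2 * ‖w‖ * ‖q‖ ^ j := by
        simp [norm_neg, map_mul, map_pow]; ring

open Filter Topology in
lemma multipliable_one_sub (q w : ℂ) (hq1 : ‖q‖ < 1) :
    Multipliable (fun j : ℕ => 1 - w * q ^ j) := by
  by_cases hz : ∃ j, 1 - w * q ^ j = 0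
  · obtain ⟨j0, hj0⟩ := hz
    refine ⟨0, ?_⟩
    have h : ∀ s : Finset ℕ, {j0} ≤ s → (∏ j ∈ s, (1 - w * q ^ j)) = 0 := by
      intro s hs
      exact Finset.prod_eq_zero (hs (Finset.mem_singleton_self j0)) hj0
    refine Tendsto.congr' ?_ tendsto_const_nhds
    filter_upwards [Filter.eventually_ge_atTop ({j0} : Finset ℕ)] with s hs
    exact (h s hs).symm
  · push_neg at hz
    exact Complex.multipliable_of_summable_log (log_summ q w hq1)

open Filter Topology in
lemma tprod_ne_zero (q w : ℂ) (hq1 : ‖q‖ < 1) (hw : ‖w‖ < 1) :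
    (∏' j : ℕ, (1 - w * q ^ j)) ≠ 0 := by
  have h2 := Complex.cexp_tsum_eq_tprod (fun j => fac_ne q w hq1 hw j) (log_summ q w hq1)
  rw [← h2]
  exact Complex.exp_ne_zero _

open Filter Topology in
lemma tendsto_partial_prod (q w : ℂ) (hq1 : ‖q‖ < 1) :
    Tendsto (fun N : ℕ => ∏ j ∈ Finset.range N, (1 - w * q ^ j)) atTop
      (𝓝 (∏' j : ℕ, (1 - w * q ^ j))) :=
  (multipliable_one_sub q w hq1).hasProd.tendsto_prod_nat

open Filter Topology in
lemma norm_lower_of_tendsto {f : ℕ → ℂ} {L : ℂ} (h0 : ∀ n, f n ≠ 0)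
    (h : Tendsto f atTop (𝓝 L)) (hL : L ≠ 0) : ∃ c > 0, ∀ n, c ≤ ‖f n‖ := by
  have hn : Tendsto (fun n => ‖f n‖) atTop (𝓝 ‖L‖) := h.norm
  have hev : ∀ᶠ n in atTop, ‖L‖/2 < ‖f n‖ :=
    hn.eventually_const_lt (half_lt_self (norm_pos_iff.mpr hL))
  obtain ⟨N, hN⟩ := hev.exists_forall_of_atTop
  classical
  have hne : (Finset.range (N+1)).Nonempty := ⟨0, by simp⟩
  set m := (Finset.range (N+1)).inf' hne (fun n => ‖f n‖) with hm
  have hmpos : 0 < m := by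
    obtain ⟨i, hi, hieq⟩ := (Finset.range (N+1)).exists_mem_eq_inf' hne (fun n => ‖f n‖)
    rw [hm, hieq]
    exact norm_pos_iff.mpr (h0 i)
  refine ⟨min m (‖L‖/2), lt_min hmpos (half_pos (norm_pos_iff.mpr hL)), fun n => ?_⟩
  rcases le_or_gt n N with hn' | hn'
  · exact le_trans (min_le_left _ _) (Finset.inf'_le _ (by simp [Nat.lt_succ_iff, hn']))
  · exact le_trans (min_le_right _ _) (hN n hn'.le).le

open Filter Topology in
-- ratio-test summability of the dominating sequence
lemma summable_dom (u v : ℝ) (hu : 0 ≤ u) (hv : 0 ≤ v) (hu1 : u < 1) (ρ : ℝ)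
    (hρ0 : 0 ≤ ρ) (hρ1 : ρ < 1) :
    Summable (fun n : ℕ => ∏ j ∈ Finset.range n, (u + ρ ^ j * v)) := by
  set d : ℕ → ℝ := fun n => ∏ j ∈ Finset.range n, (u + ρ ^ j * v) with hd
  have hdn : ∀ n, 0 ≤ d n := fun n => Finset.prod_nonneg (fun j _ => by positivity)
  have hr1 : (1 + u)/2 < 1 := by linarith
  apply summable_of_ratio_norm_eventually_le hr1
  have hto : Tendsto (fun n : ℕ => u + ρ ^ n * v) atTop (𝓝 (u + 0 * v)) := by
    exact (tendsto_const_nhds.add (((tendsto_pow_atTop_nhds_zero_of_lt_one hρ0 hρ1)).mul_const v))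
  have : ∀ᶠ n in atTop, u + ρ ^ n * v < (1+u)/2 := by
    apply hto.eventually_lt_const; linarith
  filter_upwards [this] with n hn
  have : d (n+1) = (u + ρ ^ n * v) * d n := by
    rw [hd]; simp [Finset.prod_range_succ]; ring
  rw [Real.norm_eq_abs, Real.norm_eq_abs, _root_.abs_of_nonneg (hdn _), _root_.abs_of_nonneg (hdn _), this]
  exact mul_le_mul_of_nonneg_right hn.le (hdn n)

lemma cauchy_norm_bound (q x y s : ℂ) (n : ℕ) :
    ‖cauchyP q y x n * s ^ n‖ ≤ ∏ j ∈ Finset.range n, (‖y*s‖ + ‖q‖ ^ j * ‖x*s‖) := by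
  have h1 : cauchyP q y x n * s ^ n = ∏ j ∈ Finset.range n, ((y - q ^ j * x) * s) := by
    rw [Finset.prod_mul_distrib, cauchyP, Finset.prod_const, Finset.card_range]
  rw [h1]
  calc ‖∏ j ∈ Finset.range n, ((y - q ^ j * x) * s)‖
      = ∏ j ∈ Finset.range n, ‖(y - q ^ j * x) * s‖ := by rw [norm_prod]
    _ ≤ ∏ j ∈ Finset.range n, (‖y*s‖ + ‖q‖ ^ j * ‖x*s‖) := by
        apply Finset.prod_le_prod (fun j _ => norm_nonneg _)
        intro j _
        have : (y - q ^ j * x) * s = y*s - q^j * (x*s) := by ring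
        rw [this]
        calc ‖y*s - q^j*(x*s)‖ ≤ ‖y*s‖ + ‖q^j*(x*s)‖ := norm_sub_le _ _
          _ = ‖y*s‖ + ‖q‖^j * ‖x*s‖ := by simp [norm_mul, norm_pow]

lemma S1 (q x y s : ℂ) (hq1 : ‖q‖ < 1) (hys : ‖y * s‖ < 1)
    {c : ℝ} (hc : 0 < c) (hcpq : ∀ n, c ≤ ‖qPoch q q n‖) :
    Summable (fun n : ℕ => ‖cauchyP q y x n * s ^ n / qPoch q q n‖) := by
  have hdom := summable_dom ‖y*s‖ ‖x*s‖ (norm_nonneg _) (norm_nonneg _) hys ‖q‖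
    (norm_nonneg _) hq1
  apply Summable.of_nonneg_of_le (fun n => norm_nonneg _) _ (hdom.div_const c)
  intro n
  rw [norm_div]
  rw [div_le_div_iff₀ (lt_of_lt_of_le hc (hcpq n)) hc]
  calc ‖cauchyP q y x n * s ^ n‖ * c
      ≤ (∏ j ∈ Finset.range n, (‖y*s‖ + ‖q‖ ^ j * ‖x*s‖)) * c :=
        mul_le_mul_of_nonneg_right (cauchy_norm_bound q x y s n) hc.le
    _ ≤ (∏ j ∈ Finset.range n, (‖y*s‖ + ‖q‖ ^ j * ‖x*s‖)) * ‖qPoch q q n‖ := by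
        apply mul_le_mul_of_nonneg_left (hcpq n)
        exact Finset.prod_nonneg (fun j _ => by positivity)

open Filter Topology in
lemma S2 (q w : ℂ) (hq1 : ‖q‖ < 1)
    {c : ℝ} (hc : 0 < c) (hcpq : ∀ n, c ≤ ‖qPoch q q n‖) :
    Summable (fun k : ℕ => ‖(-1:ℂ) ^ k * q ^ (k*(k-1)/2) * w ^ k / qPoch q q k‖) := by
  set b : ℕ → ℝ := fun k => ‖q‖ ^ (k*(k-1)/2) * ‖w‖ ^ k / c with hb
  have hbn : ∀ k, 0 ≤ b k := fun k => by positivity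
  have hsb : Summable b := by
    apply summable_of_ratio_norm_eventually_le (by norm_num : (1:ℝ)/2 < 1)
    have hto : Tendsto (fun k : ℕ => ‖q‖ ^ k * ‖w‖) atTop (𝓝 (0 * ‖w‖)) :=
      (tendsto_pow_atTop_nhds_zero_of_lt_one (norm_nonneg q) hq1).mul_const _
    rw [zero_mul] at hto
    filter_upwards [hto.eventually_le_const (by norm_num : (0:ℝ) < 1/2)] with k hk
    have he : b (k+1) = (‖q‖ ^ k * ‖w‖) * b k := by
      rw [hb]; simp only [Nat.add_sub_cancel]
      rw [tri k, pow_add, pow_succ]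
      field_simp
    rw [Real.norm_eq_abs, Real.norm_eq_abs, _root_.abs_of_nonneg (hbn _),
      _root_.abs_of_nonneg (hbn _), he]
    exact mul_le_mul_of_nonneg_right hk (hbn k)
  apply Summable.of_nonneg_of_le (fun n => norm_nonneg _) _ hsb
  intro k
  rw [norm_div, hb]
  have h1 : ‖(-1:ℂ) ^ k * q ^ (k*(k-1)/2) * w ^ k‖ = ‖q‖ ^ (k*(k-1)/2) * ‖w‖ ^ k := by
    simp [norm_mul, norm_pow]
  rw [h1]
  apply div_le_div_of_nonneg_left (by positivity) hc (hcpq k)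

open Filter Topology in
lemma euler_hasSum (q w : ℂ) (hq1 : ‖q‖ < 1)
    {c : ℝ} (hc : 0 < c) (hcpq : ∀ n, c ≤ ‖qPoch q q n‖) :
    HasSum (fun k : ℕ => (-1:ℂ) ^ k * q ^ (k*(k-1)/2) * w ^ k / qPoch q q k)
      (∏' j : ℕ, (1 - w * q ^ j)) := by
  set fE : ℂ → ℂ := fun u => ∑' k : ℕ, (-1:ℂ) ^ k * q ^ (k*(k-1)/2) * u ^ k / qPoch q q k
    with hfE
  have hsum : ∀ u : ℂ, HasSum (fun k : ℕ => (-1:ℂ) ^ k * q ^ (k*(k-1)/2) * u ^ k / qPoch q q k)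
      (fE u) := fun u => (S2 q u hq1 hc hcpq).of_norm.hasSum
  -- functional equation
  have step : ∀ u : ℂ, fE u = (1 - u) * fE (q * u) := by
    intro u
    set A : ℕ → ℂ := fun k => (-1:ℂ) ^ k * q ^ (k*(k-1)/2) * u ^ k / qPoch q q k with hA
    set B : ℕ → ℂ := fun k => (-1:ℂ) ^ k * q ^ (k*(k-1)/2) * (q*u) ^ k / qPoch q q k with hB
    have hAs : HasSum A (fE u) := hsum u
    have hBs : HasSum B (fE (q*u)) := hsum (q*u)
    have hCs : HasSum (fun k => A k - B k) (fE u - fE (q*u)) := hAs.sub hBs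
    have hshift : HasSum (fun k => A (k+1) - B (k+1)) (fE u - fE (q*u)) := by
      have h0 : A 0 - B 0 = 0 := by simp [hA, hB, qPoch]
      have h2 := (hasSum_nat_add_iff' (f := fun k => A k - B k) 1).mpr hCs
      simpa [h0] using h2
    have hkey : ∀ k : ℕ, A (k+1) - B (k+1) = -u * B k := by
      intro k
      have hpq : qPoch q q (k+1) = qPoch q q k * (1 - q * q ^ k) := by
        rw [qPoch, qPoch, Finset.prod_range_succ]
      have hfac : (1 : ℂ) - q * q ^ k ≠ 0 := fac_ne q q hq1 hq1 k
      have hpqk : qPoch q q k ≠ 0 := pq_ne q hq1 k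
      rw [hA, hB]
      simp only [Nat.add_sub_cancel]
      rw [tri k, hpq]
      rw [pow_add, pow_succ, pow_succ, mul_pow, pow_succ]
      field_simp
      ring
    have hDs : HasSum (fun k => -u * B k) (-u * fE (q*u)) := hBs.mul_left (-u)
    have heq : fE u - fE (q*u) = -u * fE (q*u) := by
      have h3 : HasSum (fun k => -u * B k) (fE u - fE (q*u)) := by
        refine HasSum.congr_fun hshift ?_ -- maybe wrong name
        intro k; exact (hkey k).symm
      exact h3.unique hDs
    linear_combination heq
  have iter : ∀ N : ℕ, fE w = (∏ j ∈ Finset.range N, (1 - w * q ^ j)) * fE (q ^ N * w) := by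
    intro N
    induction N with
    | zero => simp
    | succ N ih =>
      rw [ih, step (q ^ N * w), Finset.prod_range_succ]
      have h1 : q * (q ^ N * w) = q ^ (N+1) * w := by ring
      have h2 : (1 : ℂ) - q ^ N * w = 1 - w * q ^ N := by ring
      rw [h1, h2]
      ring
  have tann : Tendsto (fun N : ℕ => fE (q ^ N * w)) atTop (𝓝 1) := by
    have hg : ∑' k : ℕ, (if k = 0 then (1:ℂ) else 0) = 1 := tsum_ite_eq 0 1
    have h := tendsto_tsum_of_dominated_convergence (𝓕 := atTop)
      (f := fun (N : ℕ) (k : ℕ) => (-1:ℂ)^k * q^(k*(k-1)/2) * (q^N*w)^k / qPoch q q k)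
      (g := fun k => if k = 0 then (1:ℂ) else 0)
      (bound := fun k => ‖(-1:ℂ)^k * q^(k*(k-1)/2) * w^k / qPoch q q k‖)
      (S2 q w hq1 hc hcpq) ?_ ?_
    · rw [hg] at h
      exact h
    · intro k
      rcases k with _ | k
      · simpa [qPoch] using tendsto_const_nhds
      · simp only [Nat.succ_ne_zero, if_false]
        apply squeeze_zero_norm
          (a := fun N : ℕ => (‖q‖^((k+1)*((k+1)-1)/2) * ‖w‖^(k+1) / ‖qPoch q q (k+1)‖) * ‖q‖^N)
        · intro N
          have hle : (‖q‖^N)^(k+1) ≤ ‖q‖^N := by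
            rw [← pow_mul]
            apply pow_le_pow_of_le_one (norm_nonneg q) hq1.le
            nlinarith
          have h1 : ‖(-1:ℂ)^(k+1) * q^((k+1)*((k+1)-1)/2) * (q^N*w)^(k+1) / qPoch q q (k+1)‖
              = ‖q‖^((k+1)*((k+1)-1)/2) * ((‖q‖^N)^(k+1) * ‖w‖^(k+1)) / ‖qPoch q q (k+1)‖ := by
            simp only [norm_div, norm_mul, norm_pow, mul_pow, norm_neg, norm_one, one_pow, one_mul]
          rw [h1]
          calc ‖q‖^((k+1)*((k+1)-1)/2) * ((‖q‖^N)^(k+1) * ‖w‖^(k+1)) / ‖qPoch q q (k+1)‖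
              ≤ ‖q‖^((k+1)*((k+1)-1)/2) * (‖q‖^N * ‖w‖^(k+1)) / ‖qPoch q q (k+1)‖ := by
                gcongr
            _ = ‖q‖^((k+1)*((k+1)-1)/2) * ‖w‖^(k+1) / ‖qPoch q q (k+1)‖ * ‖q‖^N := by
                ring
        · have := (tendsto_pow_atTop_nhds_zero_of_lt_one (norm_nonneg q) hq1).const_mul
            (‖q‖^((k+1)*((k+1)-1)/2) * ‖w‖^(k+1) / ‖qPoch q q (k+1)‖)
          simpa using this
    · apply Filter.Eventually.of_forall
      intro N k
      have h1 : ‖(q^N*w)^k‖ ≤ ‖w^k‖ := by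
        rw [mul_pow, norm_mul, norm_pow, norm_pow, norm_pow]
        have hle1 : (‖q‖^N)^k ≤ 1 :=
          pow_le_one₀ (pow_nonneg (norm_nonneg q) N) (pow_le_one₀ (norm_nonneg q) hq1.le)
        calc (‖q‖^N)^k * ‖w‖^k ≤ 1 * ‖w‖^k :=
              mul_le_mul_of_nonneg_right hle1 (by positivity)
          _ = ‖w‖^k := one_mul _
      simp only [norm_div, norm_mul]
      gcongr
  have hconst : Tendsto (fun _ : ℕ => fE w) atTop
      (𝓝 ((∏' j : ℕ, (1 - w * q ^ j)) * 1)) := by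
    have := (tendsto_partial_prod q w hq1).mul tann
    refine Tendsto.congr ?_ this
    intro N
    exact (iter N).symm
  have hfinal : fE w = ∏' j : ℕ, (1 - w * q ^ j) := by
    have := tendsto_nhds_unique hconst tendsto_const_nhds
    rw [mul_one] at this
    exact this.symm
  rw [← hfinal]
  exact hsum w

open Filter Topology in
lemma cauchy_hasSum (q x y t : ℂ) (hq1 : ‖q‖ < 1) (hyt : ‖y * t‖ < 1)
    {c : ℝ} (hc : 0 < c) (hcpq : ∀ n, c ≤ ‖qPoch q q n‖) :
    HasSum (fun n : ℕ => cauchyP q y x n * t ^ n / qPoch q q n)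
      ((∏' j : ℕ, (1 - x * t * q ^ j)) / (∏' j : ℕ, (1 - y * t * q ^ j))) := by
  set fC : ℂ → ℂ := fun u => ∑' n : ℕ, cauchyP q y x n * u ^ n / qPoch q q n with hfC
  have hsum : ∀ u : ℂ, ‖y * u‖ < 1 →
      HasSum (fun n : ℕ => cauchyP q y x n * u ^ n / qPoch q q n) (fC u) :=
    fun u hu => ((S1 q x y u hq1 hu hc hcpq).of_norm).hasSum
  have step : ∀ u : ℂ, ‖y * u‖ < 1 → (1 - y*u) * fC u = (1 - x*u) * fC (q*u) := by
    intro u hu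
    have hqu : ‖y * (q*u)‖ < 1 := by
      have : ‖y * (q*u)‖ = ‖q‖ * ‖y * u‖ := by rw [show y * (q*u) = q * (y*u) by ring, norm_mul]
      rw [this]
      calc ‖q‖ * ‖y*u‖ ≤ 1 * ‖y*u‖ :=
            mul_le_mul_of_nonneg_right hq1.le (norm_nonneg _)
        _ = ‖y*u‖ := one_mul _
        _ < 1 := hu
    set A : ℕ → ℂ := fun n => cauchyP q y x n * u ^ n / qPoch q q n with hA
    set B : ℕ → ℂ := fun n => cauchyP q y x n * (q*u) ^ n / qPoch q q n with hB
    have hAs : HasSum A (fC u) := hsum u hu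
    have hBs : HasSum B (fC (q*u)) := hsum (q*u) hqu
    have hCs : HasSum (fun n => A n - B n) (fC u - fC (q*u)) := hAs.sub hBs
    have hshift : HasSum (fun n => A (n+1) - B (n+1)) (fC u - fC (q*u)) := by
      have h0 : A 0 - B 0 = 0 := by simp [hA, hB, qPoch, cauchyP]
      have h2 := (hasSum_nat_add_iff' (f := fun n => A n - B n) 1).mpr hCs
      simpa [h0] using h2
    have hkey : ∀ n : ℕ, A (n+1) - B (n+1) = y*u * A n - x*u * B n := by
      intro n
      have hpq : qPoch q q (n+1) = qPoch q q n * (1 - q * q ^ n) := by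
        rw [qPoch, qPoch, Finset.prod_range_succ]
      have hP : cauchyP q y x (n+1) = cauchyP q y x n * (y - q ^ n * x) := by
        rw [cauchyP, cauchyP, Finset.prod_range_succ]
      have hfac : (1 : ℂ) - q * q ^ n ≠ 0 := fac_ne q q hq1 hq1 n
      have hpqk : qPoch q q n ≠ 0 := pq_ne q hq1 n
      rw [hA, hB]
      simp only []
      rw [hpq, hP, pow_succ, pow_succ, mul_pow]
      field_simp
      rw [div_eq_iff (by rwa [mul_comm] at hfac)]
    have hDs : HasSum (fun n => y*u * A n - x*u * B n) (y*u * fC u - x*u * fC (q*u)) :=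
      (hAs.mul_left (y*u)).sub (hBs.mul_left (x*u))
    have heq : fC u - fC (q*u) = y*u * fC u - x*u * fC (q*u) := by
      have h3 : HasSum (fun n => y*u * A n - x*u * B n) (fC u - fC (q*u)) :=
        HasSum.congr_fun hshift (fun n => (hkey n).symm)
      exact h3.unique hDs
    linear_combination heq
  have hyN : ∀ N : ℕ, ‖y * (q ^ N * t)‖ < 1 := by
    intro N
    have h1 : ‖y * (q ^ N * t)‖ = ‖q‖^N * ‖y * t‖ := by
      rw [show y * (q ^ N * t) = q ^ N * (y * t) by ring, norm_mul, norm_pow]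
    rw [h1]
    calc ‖q‖^N * ‖y*t‖ ≤ 1 * ‖y*t‖ := by
          apply mul_le_mul_of_nonneg_right _ (norm_nonneg _)
          exact pow_le_one₀ (norm_nonneg q) hq1.le
      _ = ‖y*t‖ := one_mul _
      _ < 1 := hyt
  have iter : ∀ N : ℕ, fC t * (∏ j ∈ Finset.range N, (1 - y * t * q ^ j))
      = (∏ j ∈ Finset.range N, (1 - x * t * q ^ j)) * fC (q ^ N * t) := by
    intro N
    induction N with
    | zero => simp
    | succ N ih =>
      rw [Finset.prod_range_succ, Finset.prod_range_succ, ← mul_assoc, ih]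
      have hstep := step (q ^ N * t) (hyN N)
      have h1 : q * (q ^ N * t) = q ^ (N+1) * t := by ring
      have h2 : (1 : ℂ) - y * t * q ^ N = 1 - y * (q ^ N * t) := by ring
      have h3 : (1 : ℂ) - x * t * q ^ N = 1 - x * (q ^ N * t) := by ring
      rw [h1] at hstep
      rw [h2, h3]
      calc (∏ j ∈ Finset.range N, (1 - x * t * q ^ j)) * fC (q ^ N * t) * (1 - y * (q^N*t))
          = (∏ j ∈ Finset.range N, (1 - x * t * q ^ j)) * ((1 - y * (q^N*t)) * fC (q ^ N * t)) := by
            ring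
        _ = (∏ j ∈ Finset.range N, (1 - x * t * q ^ j)) * ((1 - x * (q^N*t)) * fC (q ^ (N+1) * t)) := by
            rw [hstep]
        _ = (∏ j ∈ Finset.range N, (1 - x * t * q ^ j)) * (1 - x * (q^N*t)) * fC (q ^ (N+1) * t) := by
            ring
  have tann : Tendsto (fun N : ℕ => fC (q ^ N * t)) atTop (𝓝 1) := by
    have hg : ∑' n : ℕ, (if n = 0 then (1:ℂ) else 0) = 1 := tsum_ite_eq 0 1
    have h := tendsto_tsum_of_dominated_convergence (𝓕 := atTop)
      (f := fun (N : ℕ) (n : ℕ) => cauchyP q y x n * (q ^ N * t) ^ n / qPoch q q n)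
      (g := fun n => if n = 0 then (1:ℂ) else 0)
      (bound := fun n => ‖cauchyP q y x n * t ^ n / qPoch q q n‖)
      (S1 q x y t hq1 hyt hc hcpq) ?_ ?_
    · rw [hg] at h
      exact h
    · intro n
      rcases n with _ | n
      · simpa [qPoch, cauchyP] using tendsto_const_nhds
      · simp only [Nat.succ_ne_zero, if_false]
        apply squeeze_zero_norm
          (a := fun N : ℕ => (‖cauchyP q y x (n+1)‖ * ‖t‖^(n+1) / ‖qPoch q q (n+1)‖) * ‖q‖^N)
        · intro N
          have hle : (‖q‖^N)^(n+1) ≤ ‖q‖^N := by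
            rw [← pow_mul]
            apply pow_le_pow_of_le_one (norm_nonneg q) hq1.le
            nlinarith
          have h1 : ‖cauchyP q y x (n+1) * (q ^ N * t) ^ (n+1) / qPoch q q (n+1)‖
              = ‖cauchyP q y x (n+1)‖ * ((‖q‖^N)^(n+1) * ‖t‖^(n+1)) / ‖qPoch q q (n+1)‖ := by
            simp only [norm_div, norm_mul, norm_pow, mul_pow]
          rw [h1]
          calc ‖cauchyP q y x (n+1)‖ * ((‖q‖^N)^(n+1) * ‖t‖^(n+1)) / ‖qPoch q q (n+1)‖
              ≤ ‖cauchyP q y x (n+1)‖ * (‖q‖^N * ‖t‖^(n+1)) / ‖qPoch q q (n+1)‖ := by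
                gcongr
            _ = ‖cauchyP q y x (n+1)‖ * ‖t‖^(n+1) / ‖qPoch q q (n+1)‖ * ‖q‖^N := by
                ring
        · have := (tendsto_pow_atTop_nhds_zero_of_lt_one (norm_nonneg q) hq1).const_mul
            (‖cauchyP q y x (n+1)‖ * ‖t‖^(n+1) / ‖qPoch q q (n+1)‖)
          simpa using this
    · apply Filter.Eventually.of_forall
      intro N n
      have h1 : ‖(q ^ N * t)^n‖ ≤ ‖t^n‖ := by
        rw [mul_pow, norm_mul, norm_pow, norm_pow, norm_pow]
        have hle1 : (‖q‖^N)^n ≤ 1 :=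
          pow_le_one₀ (pow_nonneg (norm_nonneg q) N) (pow_le_one₀ (norm_nonneg q) hq1.le)
        calc (‖q‖^N)^n * ‖t‖^n ≤ 1 * ‖t‖^n :=
              mul_le_mul_of_nonneg_right hle1 (by positivity)
          _ = ‖t‖^n := one_mul _
      simp only [norm_div, norm_mul]
      gcongr
  have hPY := tendsto_partial_prod q (y*t) hq1
  have hPX := tendsto_partial_prod q (x*t) hq1
  have hlim1 : Tendsto (fun N : ℕ => fC t * ∏ j ∈ Finset.range N, (1 - y * t * q ^ j)) atTop
      (𝓝 (fC t * ∏' j : ℕ, (1 - y * t * q ^ j))) := hPY.const_mul (fC t)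
  have hlim2 : Tendsto (fun N : ℕ => (∏ j ∈ Finset.range N, (1 - x * t * q ^ j)) * fC (q ^ N * t))
      atTop (𝓝 ((∏' j : ℕ, (1 - x * t * q ^ j)) * 1)) := hPX.mul tann
  have hkey2 : fC t * (∏' j : ℕ, (1 - y * t * q ^ j)) = ∏' j : ℕ, (1 - x * t * q ^ j) := by
    have := tendsto_nhds_unique (hlim1.congr (fun N => iter N)) hlim2
    rw [mul_one] at this
    calc fC t * (∏' j : ℕ, (1 - y * t * q ^ j))
        = (∏ j ∈ Finset.range 0, (1 - x * t * q ^ j)) * fC (q ^ 0 * t)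
            * (∏' j : ℕ, (1 - y * t * q ^ j)) / (∏ j ∈ Finset.range 0, (1 - y * t * q ^ j)) := by
          simp
      _ = ∏' j : ℕ, (1 - x * t * q ^ j) := by simp; exact this
  have hPYne : (∏' j : ℕ, (1 - y * t * q ^ j)) ≠ 0 := tprod_ne_zero q (y*t) hq1 hyt
  have hfC : fC t = (∏' j : ℕ, (1 - x * t * q ^ j)) / (∏' j : ℕ, (1 - y * t * q ^ j)) := by
    rw [eq_div_iff hPYne]
    exact hkey2
  rw [← hfC]
  exact hsum t hyt

open Filter Topology in
theorem trivariate_generating_function (q x y z t : ℂ) (hq0 : 0 < ‖q‖)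
    (hq1 : ‖q‖ < 1) (hyt : ‖y * t‖ < 1) :
    HasSum (fun n : ℕ =>
        Fpoly q x y z n * (-1) ^ n * q ^ (n * (n - 1) / 2) * t ^ n / qPoch q q n)
      ((∏' j : ℕ, (1 - x * t * q ^ j)) * (∏' j : ℕ, (1 - z * t * q ^ j)) /
        ∏' j : ℕ, (1 - y * t * q ^ j)) := by
  have hqne : q ≠ 0 := by
    intro h; rw [h] at hq0; simp at hq0
  obtain ⟨c, hc, hcpq⟩ := norm_lower_of_tendsto (pq_ne q hq1)
    (tendsto_partial_prod q q hq1) (tprod_ne_zero q q hq1 hq1)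
  set aC : ℕ → ℂ := fun n => cauchyP q y x n * t ^ n / qPoch q q n with haC
  set aE : ℕ → ℂ := fun k => (-1:ℂ) ^ k * q ^ (k*(k-1)/2) * (z*t) ^ k / qPoch q q k with haE
  have hC : HasSum aC ((∏' j : ℕ, (1 - x * t * q ^ j)) / (∏' j : ℕ, (1 - y * t * q ^ j))) :=
    cauchy_hasSum q x y t hq1 hyt hc hcpq
  have hE : HasSum aE (∏' j : ℕ, (1 - z * t * q ^ j)) :=
    euler_hasSum q (z*t) hq1 hc hcpq
  have hCn : Summable (fun n => ‖aC n‖) := S1 q x y t hq1 hyt hc hcpq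
  have hEn : Summable (fun k => ‖aE k‖) := S2 q (z*t) hq1 hc hcpq
  have hprod := hasSum_sum_range_mul_of_summable_norm hCn hEn
  rw [hC.tsum_eq, hE.tsum_eq] at hprod
  have hval : (∏' j : ℕ, (1 - x * t * q ^ j)) * (∏' j : ℕ, (1 - z * t * q ^ j)) /
        (∏' j : ℕ, (1 - y * t * q ^ j))
      = (∏' j : ℕ, (1 - x * t * q ^ j)) / (∏' j : ℕ, (1 - y * t * q ^ j)) *
        (∏' j : ℕ, (1 - z * t * q ^ j)) := by
    rw [div_mul_eq_mul_div]
  rw [hval]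
  apply HasSum.congr_fun hprod
  intro n
  -- reduce Fpoly prefactors
  have hm : ((-1:ℂ)) ^ n * q ^ (-((n * (n - 1) / 2 : ℕ) : ℤ)) * (-1:ℂ) ^ n
      * q ^ (n * (n - 1) / 2 : ℕ) = 1 := by
    rw [zpow_neg, zpow_natCast]
    have h1 : ((-1:ℂ)) ^ n * (-1:ℂ) ^ n = 1 := by
      rw [← mul_pow]; norm_num
    have h2 : (q ^ (n * (n - 1) / 2 : ℕ))⁻¹ * q ^ (n * (n - 1) / 2 : ℕ) = 1 :=
      inv_mul_cancel₀ (pow_ne_zero _ hqne)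
    calc (-1:ℂ) ^ n * (q ^ (n * (n - 1) / 2 : ℕ))⁻¹ * (-1:ℂ) ^ n * q ^ (n * (n - 1) / 2 : ℕ)
        = ((-1:ℂ) ^ n * (-1:ℂ) ^ n) * ((q ^ (n * (n - 1) / 2 : ℕ))⁻¹ * q ^ (n * (n - 1) / 2 : ℕ)) := by
          ring
      _ = 1 := by rw [h1, h2, one_mul]
  have hF : Fpoly q x y z n * (-1) ^ n * q ^ (n * (n - 1) / 2) * t ^ n / qPoch q q n
      = (∑ k ∈ Finset.range (n + 1),
          qBinom q n k * (-1) ^ k * q ^ (k * (k - 1) / 2) * cauchyP q y x (n - k) * z ^ k)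
        * t ^ n / qPoch q q n := by
    rw [Fpoly]
    calc (-1:ℂ) ^ n * q ^ (-((n * (n - 1) / 2 : ℕ) : ℤ)) *
          (∑ k ∈ Finset.range (n + 1),
            qBinom q n k * (-1) ^ k * q ^ (k * (k - 1) / 2) * cauchyP q y x (n - k) * z ^ k)
          * (-1) ^ n * q ^ (n * (n - 1) / 2) * t ^ n / qPoch q q n
        = ((-1:ℂ) ^ n * q ^ (-((n * (n - 1) / 2 : ℕ) : ℤ)) * (-1:ℂ) ^ n
            * q ^ (n * (n - 1) / 2 : ℕ)) *
          ((∑ k ∈ Finset.range (n + 1),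
            qBinom q n k * (-1) ^ k * q ^ (k * (k - 1) / 2) * cauchyP q y x (n - k) * z ^ k)
           * t ^ n / qPoch q q n) := by
          ring
      _ = _ := by rw [hm, one_mul]
  rw [hF, Finset.sum_mul, Finset.sum_div]
  rw [← Finset.sum_range_reflect (fun k => aC k * aE (n - k)) (n+1)]
  apply Finset.sum_congr rfl
  intro k hk
  have hkn : k ≤ n := Nat.lt_succ_iff.mp (Finset.mem_range.mp hk)
  simp only [Nat.add_sub_cancel]
  rw [Nat.sub_sub_self hkn]
  have hts : t ^ (n-k) * t ^ k = t ^ n := by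
    rw [← pow_add, Nat.sub_add_cancel hkn]
  rw [haC, haE]
  simp only []
  rw [qBinom, ← hts, mul_pow]
  field_simp [pq_ne q hq1 n, pq_ne q hq1 k, pq_ne q hq1 (n-k)]
end
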